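/- Every fixed point free element f of PL⁺(ℝ) can be written as f = g ∘ h where g and h belong to PL⁺(ℝ) and each of g and h is reversible in PL⁺(ℝ) (i.e., each is conjugated to its inverse by some element of PL⁺(ℝ)). -/

import Mathlib

/-- `f` is a homeomorphism of `ℝ`: a bijection of `ℝ` that is continuous in both directions. -/
def IsHomeo (f : Equiv.Perm ℝ) : Prop := Continuous f ∧ Continuous f.symm

/-- `f` is locally affine at `x`: it agrees with an affine map on a neighbourhood of `x`. -/
def IsLocallyAffineAt (f : ℝ → ℝ) (x : ℝ) : Prop :=
  ∃ a b : ℝ, ∀ᶠ y in nhds x, f y = a * y + b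

/-- Membership in PLF(ℝ): a homeomorphism of `ℝ` that is locally affine at all but
finitely many points. -/
def InPLF (f : Equiv.Perm ℝ) : Prop :=
  IsHomeo f ∧ {x : ℝ | ¬ IsLocallyAffineAt (⇑f) x}.Finite

/-- Membership in PL(ℝ): a homeomorphism of `ℝ` whose set of points of non-local-affinity
has no accumulation point in `ℝ`. -/
def InPL (f : Equiv.Perm ℝ) : Prop :=
  IsHomeo f ∧ ∀ x : ℝ, ¬ AccPt x (Filter.principal {y : ℝ | ¬ IsLocallyAffineAt (⇑f) y})

open Filter Set

-- locality of AccPt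
lemma accPt_inter {x : ℝ} {C U : Set ℝ} (hU : U ∈ nhds x) (h : AccPt x (𝓟 C)) :
    AccPt x (𝓟 (C ∩ U)) := by
  rw [accPt_iff_nhds] at h ⊢
  intro V hV
  obtain ⟨y, ⟨hy1, hy2⟩, hy3⟩ := h (V ∩ U) (Filter.inter_mem hV hU)
  exact ⟨y, ⟨hy1.1, hy2, hy1.2⟩, hy3⟩

lemma not_accPt_of_finite {x : ℝ} {C : Set ℝ} (hC : C.Finite) : ¬ AccPt x (𝓟 C) := by
  intro h
  rw [accPt_iff_nhds] at h
  have hcl : IsClosed (C \ {x}) := (hC.subset diff_subset).isClosed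
  obtain ⟨y, ⟨hy1, hy2⟩, hy3⟩ := h ((C \ {x})ᶜ) (hcl.isOpen_compl.mem_nhds (by simp))
  exact hy1 ⟨hy2, hy3⟩

lemma accPt_union {x : ℝ} {C D : Set ℝ} (h : AccPt x (𝓟 (C ∪ D))) :
    AccPt x (𝓟 C) ∨ AccPt x (𝓟 D) := by
  rw [← accPt_sup]
  rwa [← Filter.sup_principal] at h

lemma AccPt.of_subset {x : ℝ} {C D : Set ℝ} (h : AccPt x (𝓟 C)) (hCD : C ⊆ D) :
    AccPt x (𝓟 D) := h.mono (principal_mono.2 hCD)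

/-- transfer of accumulation along a continuous injective map -/
lemma accPt_image {φ : ℝ → ℝ} {x : ℝ} {C : Set ℝ} (hc : Continuous φ)
    (hi : Function.Injective φ) (h : AccPt x (𝓟 (φ ⁻¹' C))) : AccPt (φ x) (𝓟 C) := by
  rw [accPt_iff_nhds] at h ⊢
  intro U hU
  obtain ⟨y, ⟨hy1, hy2⟩, hy3⟩ := h (φ ⁻¹' U) (hc.continuousAt.preimage_mem_nhds hU)
  exact ⟨φ y, ⟨hy1, hy2⟩, fun he => hy3 (hi he)⟩

lemma isLocallyAffineAt_comp {f g : ℝ → ℝ} {x : ℝ} (hg : Continuous g)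
    (h1 : IsLocallyAffineAt g x) (h2 : IsLocallyAffineAt f (g x)) :
    IsLocallyAffineAt (f ∘ g) x := by
  obtain ⟨a, b, hab⟩ := h1
  obtain ⟨c, d, hcd⟩ := h2
  refine ⟨c * a, c * b + d, ?_⟩
  have h3 : ∀ᶠ y in nhds x, f (g y) = c * g y + d :=
    (hg.continuousAt.eventually hcd : _)
  filter_upwards [hab, h3] with y h4 h5
  rw [Function.comp_apply, h5, h4]; ring

lemma InPL.one : InPL 1 := by
  refine ⟨⟨by simpa using continuous_id, by exact continuous_id⟩, ?_⟩
  intro x h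
  have he : {y : ℝ | ¬ IsLocallyAffineAt (⇑(1 : Equiv.Perm ℝ)) y} = ∅ := by
    apply Set.eq_empty_iff_forall_notMem.2
    intro y hy
    exact hy ⟨1, 0, by filter_upwards with z; simp⟩
  rw [he] at h
  exact not_accPt_of_finite Set.finite_empty h

lemma InPL.mul {e1 e2 : Equiv.Perm ℝ} (h1 : InPL e1) (h2 : InPL e2) : InPL (e1 * e2) := by
  obtain ⟨⟨hc1, hs1⟩, hb1⟩ := h1
  obtain ⟨⟨hc2, hs2⟩, hb2⟩ := h2
  constructor
  · constructor
    · show Continuous ⇑(e1 * e2)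
      rw [Equiv.Perm.coe_mul]
      exact hc1.comp hc2
    · show Continuous ⇑(e1 * e2)⁻¹
      rw [mul_inv_rev, Equiv.Perm.coe_mul]
      have a2 : Continuous ⇑e2⁻¹ := by rw [Equiv.Perm.inv_def]; exact hs2
      have a1 : Continuous ⇑e1⁻¹ := by rw [Equiv.Perm.inv_def]; exact hs1
      exact a2.comp a1
  · intro x hacc
    have hsub : {y : ℝ | ¬ IsLocallyAffineAt (⇑(e1 * e2)) y} ⊆
        (⇑e2 ⁻¹' {y | ¬ IsLocallyAffineAt (⇑e1) y}) ∪ {y | ¬ IsLocallyAffineAt (⇑e2) y} := by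
      intro y hy
      by_contra hcon
      simp only [Set.mem_union, Set.mem_preimage, Set.mem_setOf_eq, not_or, not_not] at hcon
      exact hy (by simpa [Equiv.Perm.coe_mul] using
        isLocallyAffineAt_comp hc2 hcon.2 hcon.1)
    rcases accPt_union (hacc.of_subset hsub) with h | h
    · exact hb1 (e2 x) (accPt_image hc2 e2.injective h)
    · exact hb2 x h

lemma InPL.inv {e : Equiv.Perm ℝ} (h : InPL e) : InPL e⁻¹ := by
  obtain ⟨⟨hc, hs⟩, hb⟩ := h
  have hsc : Continuous ⇑e⁻¹ := by simpa [Equiv.Perm.inv_def] using hs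
  constructor
  · exact ⟨hsc, by simpa [Equiv.Perm.inv_def] using hc⟩
  · intro x hacc
    have hsub : {y : ℝ | ¬ IsLocallyAffineAt (⇑e⁻¹) y} ⊆
        ⇑e⁻¹ ⁻¹' {y | ¬ IsLocallyAffineAt (⇑e) y} := by
      intro y hy
      by_contra hcon
      simp only [Set.mem_preimage, Set.mem_setOf_eq, not_not] at hcon
      apply hy
      obtain ⟨a, b, hab⟩ := hcon
      -- a ≠ 0 since e is injective
      have ha : a ≠ 0 := by
        intro ha0
        subst ha0
        obtain ⟨U, hU, hUo, hUx⟩ := eventually_nhds_iff.1 hab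
        obtain ⟨ε, hε, hball⟩ := Metric.isOpen_iff.1 hUo _ hUx
        have p1 : e (e⁻¹ y) = 0 * (e⁻¹ y) + b := hU _ hUx
        have p2 : e (e⁻¹ y + ε/2) = 0 * (e⁻¹ y + ε/2) + b := by
          apply hU
          apply hball
          rw [Metric.mem_ball, Real.dist_eq]
          have hrw : e⁻¹ y + ε/2 - e⁻¹ y = ε/2 := by ring
          rw [hrw, abs_of_pos (by linarith)]
          linarith
        have heq : e (e⁻¹ y) = e (e⁻¹ y + ε/2) := by rw [p1, p2]; ring
        have := e.injective heq
        linarith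
      refine ⟨a⁻¹, -b/a, ?_⟩
      have h3 : ∀ᶠ z in nhds y, e (e⁻¹ z) = a * (e⁻¹ z) + b :=
        (hsc.continuousAt.eventually hab : _)
      filter_upwards [h3] with z hz
      have hzz : z = a * (e⁻¹ z) + b := by
        conv_lhs => rw [← Equiv.apply_symm_apply e z]
        exact hz
      have h4 : a * e⁻¹ z = z - b := by linarith
      calc e⁻¹ z = a⁻¹ * (a * e⁻¹ z) := by field_simp
      _ = a⁻¹ * (z - b) := by rw [h4]
      _ = a⁻¹ * z + -b / a := by field_simp; ring
    exact hb (e⁻¹ x) (accPt_image hsc e⁻¹.injective (hacc.of_subset hsub))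

lemma strictMono_perm_inv {e : Equiv.Perm ℝ} (h : StrictMono ⇑e) : StrictMono ⇑e⁻¹ := by
  intro x y hxy
  rcases lt_trichotomy (e⁻¹ x) (e⁻¹ y) with h1 | h1 | h1
  · exact h1
  · exfalso
    have := congrArg e h1
    simp only [Equiv.Perm.coe_inv, Equiv.apply_symm_apply] at this
    exact absurd this (ne_of_lt hxy)
  · exfalso
    have := h h1
    simp only [Equiv.Perm.coe_inv, Equiv.apply_symm_apply] at this
    linarith

lemma InPL.zpow {e : Equiv.Perm ℝ} (h : InPL e) (n : ℤ) : InPL (e ^ n) := by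
  induction n using Int.induction_on with
  | zero => simpa using InPL.one
  | succ n ih => rw [zpow_add_one]; exact ih.mul h
  | pred n ih => rw [zpow_sub_one]; exact ih.mul h.inv

lemma strictMono_zpow {e : Equiv.Perm ℝ} (h : StrictMono ⇑e) (n : ℤ) :
    StrictMono ⇑(e ^ n) := by
  induction n using Int.induction_on with
  | zero => simpa using strictMono_id
  | succ n ih =>
    rw [zpow_add_one, Equiv.Perm.coe_mul]
    exact ih.comp h
  | pred n ih =>
    rw [zpow_sub_one, Equiv.Perm.coe_mul]
    exact ih.comp (strictMono_perm_inv h)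

noncomputable def mkPerm (g : ℝ → ℝ) (h1 : StrictMono g) (h2 : Function.Surjective g) :
    Equiv.Perm ℝ := (StrictMono.orderIsoOfSurjective g h1 h2).toEquiv

lemma mkPerm_coe (g : ℝ → ℝ) (h1 : StrictMono g) (h2 : Function.Surjective g) :
    ⇑(mkPerm g h1 h2) = g := rfl

lemma mkPerm_isHomeo (g : ℝ → ℝ) (h1 : StrictMono g) (h2 : Function.Surjective g) :
    IsHomeo (mkPerm g h1 h2) := by
  constructor
  · exact (OrderIso.toHomeomorph (StrictMono.orderIsoOfSurjective g h1 h2)).continuous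
  · exact (OrderIso.toHomeomorph (StrictMono.orderIsoOfSurjective g h1 h2)).symm.continuous

/-! ### periodic-displacement maps via `Int.fract` -/

noncomputable def mkF (S : ℝ → ℝ) : ℝ → ℝ := fun x => (⌊x⌋ : ℝ) + S (Int.fract x)

lemma mkF_add_int (S : ℝ → ℝ) (x : ℝ) (n : ℤ) : mkF S (x + n) = mkF S x + n := by
  unfold mkF
  rw [Int.fract_add_intCast, Int.floor_add_intCast]
  push_cast; ring

lemma mkF_eq_on (S : ℝ → ℝ) {x : ℝ} {n : ℤ} (h1 : (n : ℝ) ≤ x) (h2 : x < n + 1) :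
    mkF S x = n + S (x - n) := by
  have hf : ⌊x⌋ = n := Int.floor_eq_iff.mpr ⟨h1, by push_cast; linarith⟩
  unfold mkF
  rw [Int.fract, hf]

lemma mkF_strictMono {S : ℝ → ℝ} (hS : StrictMono S) (hper : S 1 = S 0 + 1) :
    StrictMono (mkF S) := by
  intro x y hxy
  have hfl : ⌊x⌋ ≤ ⌊y⌋ := Int.floor_le_floor hxy.le
  unfold mkF
  rcases eq_or_lt_of_le hfl with he | hl
  · have : Int.fract x < Int.fract y := by
      unfold Int.fract; rw [he]; linarith
    have := hS this
    rw [he]; linarith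
  · have b1 : S (Int.fract x) < S 1 := hS (Int.fract_lt_one x)
    have b2 : S 0 ≤ S (Int.fract y) := hS.monotone (Int.fract_nonneg y)
    have : (⌊x⌋ : ℝ) + 1 ≤ (⌊y⌋ : ℝ) := by exact_mod_cast hl
    rw [hper] at b1
    linarith

lemma mkF_continuous {S : ℝ → ℝ} (hS : Continuous S) (hper : S 1 = S 0 + 1) :
    Continuous (mkF S) := by
  have hrw : mkF S = fun x => x + ((fun t => S t - t) ∘ Int.fract) x := by
    funext x
    have : (⌊x⌋ : ℝ) = x - Int.fract x := by rw [Int.fract]; ring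
    simp only [mkF, Function.comp_apply, this]
    ring
  rw [hrw]
  apply continuous_id.add
  apply ContinuousOn.comp_fract'' (hS.continuousOn.sub continuousOn_id)
  simp [hper]

lemma mkF_surjective {S : ℝ → ℝ} (hS : Continuous S) (hmono : Monotone S)
    (hper : S 1 = S 0 + 1) : Function.Surjective (mkF S) := by
  intro y
  have hcont := mkF_continuous hS hper
  have hub : ∀ x : ℝ, mkF S x ≤ x + S 1 := by
    intro x
    have h1 : S (Int.fract x) ≤ S 1 := hmono (Int.fract_lt_one x).le
    have h2 : (⌊x⌋ : ℝ) ≤ x := Int.floor_le x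
    unfold mkF; linarith
  have hlb : ∀ x : ℝ, x + S 0 - 1 ≤ mkF S x := by
    intro x
    have h1 : S 0 ≤ S (Int.fract x) := hmono (Int.fract_nonneg x)
    have h2 : x - 1 < (⌊x⌋ : ℝ) := by
      have := Int.lt_floor_add_one x; linarith
    unfold mkF; linarith
  have hab : y - S 1 ≤ y - S 0 + 1 := by linarith [hper.le]
  have himage := intermediate_value_Icc hab hcont.continuousOn (a := y - S 1) (b := y - S 0 + 1)
  have hy : y ∈ Set.Icc (mkF S (y - S 1)) (mkF S (y - S 0 + 1)) := by
    constructor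
    · have := hub (y - S 1); linarith
    · have := hlb (y - S 0 + 1); linarith
  obtain ⟨x, _, hx⟩ := himage hy
  exact ⟨x, hx⟩

/-- sets hitting each period in a fixed finite set have no accumulation points -/
lemma not_accPt_fract {F : Set ℝ} (hF : F.Finite) (x : ℝ) :
    ¬ AccPt x (𝓟 {y : ℝ | Int.fract y ∈ F}) := by
  intro h
  have h2 := accPt_inter (Ioo_mem_nhds (by linarith : x - 1 < x) (by linarith : x < x + 1)) h
  apply not_accPt_of_finite ?_ h2
  have hsub : {y : ℝ | Int.fract y ∈ F} ∩ Set.Ioo (x-1) (x+1) ⊆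
      (fun p : ℝ × ℤ => p.1 + p.2) '' (F ×ˢ (Set.Icc (⌊x⌋ - 2) (⌊x⌋ + 2))) := by
    rintro y ⟨hy1, hy2, hy3⟩
    refine ⟨⟨Int.fract y, ⌊y⌋⟩, ⟨hy1, ?_, ?_⟩, Int.fract_add_floor y⟩
    · have h1 : (⌊x⌋ : ℝ) - 2 ≤ ⌊y⌋ := by
        have := Int.lt_floor_add_one y
        have := Int.floor_le x
        linarith
      exact_mod_cast h1
    · have h1 : (⌊y⌋ : ℝ) ≤ ⌊x⌋ + 2 := by
        have := Int.floor_le y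
        have := Int.lt_floor_add_one x
        linarith
      exact_mod_cast h1
  exact Set.Finite.subset ((hF.prod (Set.finite_Icc _ _)).image _) hsub

/-! ### The explicit model maps -/

noncomputable def SG : ℝ → ℝ := fun t => min (max (t/2 + 1/8) (2*t - 3/8)) (t/2 + 5/8)
noncomputable def SK : ℝ → ℝ := fun t => min (max (t/7 + 19/56) (7*t - 11/8)) (t/7 + 67/56)
noncomputable def Gfun : ℝ → ℝ := mkF SG
noncomputable def Kfun : ℝ → ℝ := mkF SK

lemma SG_strictMono : StrictMono SG := by
  intro a b h
  unfold SG
  exact min_lt_min (max_lt_max (by linarith) (by linarith)) (by linarith)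

lemma SK_strictMono : StrictMono SK := by
  intro a b h
  unfold SK
  exact min_lt_min (max_lt_max (by linarith) (by linarith)) (by linarith)

lemma SG_continuous : Continuous SG := by
  apply Continuous.min
  · apply Continuous.max <;> fun_prop
  · fun_prop

lemma SK_continuous : Continuous SK := by
  apply Continuous.min
  · apply Continuous.max <;> fun_prop
  · fun_prop

lemma SG_per : SG 1 = SG 0 + 1 := by
  unfold SG
  rw [max_eq_right (by norm_num), max_eq_left (by norm_num),
    min_eq_right (by norm_num), min_eq_left (by norm_num)]
  norm_num

lemma SK_per : SK 1 = SK 0 + 1 := by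
  unfold SK
  rw [max_eq_right (by norm_num), max_eq_left (by norm_num),
    min_eq_right (by norm_num), min_eq_left (by norm_num)]
  norm_num

lemma Gfun_strictMono : StrictMono Gfun := mkF_strictMono SG_strictMono SG_per
lemma Kfun_strictMono : StrictMono Kfun := mkF_strictMono SK_strictMono SK_per
lemma Gfun_continuous : Continuous Gfun := mkF_continuous SG_continuous SG_per
lemma Kfun_continuous : Continuous Kfun := mkF_continuous SK_continuous SK_per
lemma Gfun_surjective : Function.Surjective Gfun :=
  mkF_surjective SG_continuous SG_strictMono.monotone SG_per
lemma Kfun_surjective : Function.Surjective Kfun :=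
  mkF_surjective SK_continuous SK_strictMono.monotone SK_per
lemma Gfun_add_int (x : ℝ) (n : ℤ) : Gfun (x + n) = Gfun x + n := mkF_add_int SG x n
lemma Kfun_add_int (x : ℝ) (n : ℤ) : Kfun (x + n) = Kfun x + n := mkF_add_int SK x n

lemma Gv1 (n : ℤ) {x : ℝ} (h1 : (n:ℝ) ≤ x) (h2 : x ≤ n + 1/3) :
    Gfun x = x/2 + 1/8 + n/2 := by
  rw [Gfun, mkF_eq_on SG h1 (by linarith), SG,
    max_eq_left (by linarith), min_eq_left (by linarith)]
  ring

lemma Gv2 (n : ℤ) {x : ℝ} (h1 : (n:ℝ) + 1/3 ≤ x) (h2 : x ≤ n + 2/3) :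
    Gfun x = 2*x - 3/8 - n := by
  rw [Gfun, mkF_eq_on SG (by linarith) (by linarith), SG,
    max_eq_right (by linarith), min_eq_left (by linarith)]
  ring

lemma Gv3 (n : ℤ) {x : ℝ} (h1 : (n:ℝ) + 2/3 ≤ x) (h2 : x < n + 1) :
    Gfun x = x/2 + 5/8 + n/2 := by
  rw [Gfun, mkF_eq_on SG (by linarith) (by linarith), SG,
    max_eq_right (by linarith), min_eq_right (by linarith)]
  ring

lemma Kv1 (n : ℤ) {x : ℝ} (h1 : (n:ℝ) ≤ x) (h2 : x ≤ n + 1/4) :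
    Kfun x = x/7 + 19/56 + 6*n/7 := by
  rw [Kfun, mkF_eq_on SK h1 (by linarith), SK,
    max_eq_left (by linarith), min_eq_left (by linarith)]
  ring

lemma Kv2 (n : ℤ) {x : ℝ} (h1 : (n:ℝ) + 1/4 ≤ x) (h2 : x ≤ n + 3/8) :
    Kfun x = 7*x - 11/8 - 6*n := by
  rw [Kfun, mkF_eq_on SK (by linarith) (by linarith), SK,
    max_eq_right (by linarith), min_eq_left (by linarith)]
  ring

lemma Kv3 (n : ℤ) {x : ℝ} (h1 : (n:ℝ) + 3/8 ≤ x) (h2 : x < n + 1) :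
    Kfun x = x/7 + 67/56 + 6*n/7 := by
  rw [Kfun, mkF_eq_on SK (by linarith) (by linarith), SK,
    max_eq_right (by linarith), min_eq_right (by linarith)]
  ring
set_option maxHeartbeats 1000000 in
lemma Ident1_base {x : ℝ} (hx0 : 0 ≤ x) (hx1 : x < 1) :
    Gfun (Kfun (Gfun x)) = Kfun x := by
  rcases lt_or_ge x ((1 : ℝ)/4) with hc0 | hc0
  · -- [0, 1/4)
    have e1 : Gfun x = ((1 : ℝ)/2) * x + ((1 : ℝ)/8) := by
      have h := Gv1 (0 : ℤ) (x := x) (by push_cast; linarith) (by push_cast; linarith)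
      push_cast at h; linarith
    have e2 : Kfun (((1 : ℝ)/2) * x + ((1 : ℝ)/8)) = ((1 : ℝ)/14) * x + ((5 : ℝ)/14) := by
      have h := Kv1 (0 : ℤ) (x := ((1 : ℝ)/2) * x + ((1 : ℝ)/8)) (by push_cast; linarith) (by push_cast; linarith)
      push_cast at h; linarith
    have e3 : Gfun (((1 : ℝ)/14) * x + ((5 : ℝ)/14)) = ((1 : ℝ)/7) * x + ((19 : ℝ)/56) := by
      have h := Gv2 (0 : ℤ) (x := ((1 : ℝ)/14) * x + ((5 : ℝ)/14)) (by push_cast; linarith) (by push_cast; linarith)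
      push_cast at h; linarith
    have e4 : Kfun x = ((1 : ℝ)/7) * x + ((19 : ℝ)/56) := by
      have h := Kv1 (0 : ℤ) (x := x) (by push_cast; linarith) (by push_cast; linarith)
      push_cast at h; linarith
    rw [e1, e2, e3]; exact e4.symm
  rcases lt_or_ge x ((1 : ℝ)/3) with hc1 | hc1
  · -- [1/4, 1/3)
    have e1 : Gfun x = ((1 : ℝ)/2) * x + ((1 : ℝ)/8) := by
      have h := Gv1 (0 : ℤ) (x := x) (by push_cast; linarith) (by push_cast; linarith)
      push_cast at h; linarith
    have e2 : Kfun (((1 : ℝ)/2) * x + ((1 : ℝ)/8)) = ((7 : ℝ)/2) * x + ((-1 : ℝ)/2) := by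
      have h := Kv2 (0 : ℤ) (x := ((1 : ℝ)/2) * x + ((1 : ℝ)/8)) (by push_cast; linarith) (by push_cast; linarith)
      push_cast at h; linarith
    have e3 : Gfun (((7 : ℝ)/2) * x + ((-1 : ℝ)/2)) = (7 : ℝ) * x + ((-11 : ℝ)/8) := by
      have h := Gv2 (0 : ℤ) (x := ((7 : ℝ)/2) * x + ((-1 : ℝ)/2)) (by push_cast; linarith) (by push_cast; linarith)
      push_cast at h; linarith
    have e4 : Kfun x = (7 : ℝ) * x + ((-11 : ℝ)/8) := by
      have h := Kv2 (0 : ℤ) (x := x) (by push_cast; linarith) (by push_cast; linarith)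
      push_cast at h; linarith
    rw [e1, e2, e3]; exact e4.symm
  rcases lt_or_ge x ((5 : ℝ)/14) with hc2 | hc2
  · -- [1/3, 5/14)
    have e1 : Gfun x = (2 : ℝ) * x + ((-3 : ℝ)/8) := by
      have h := Gv2 (0 : ℤ) (x := x) (by push_cast; linarith) (by push_cast; linarith)
      push_cast at h; linarith
    have e2 : Kfun ((2 : ℝ) * x + ((-3 : ℝ)/8)) = (14 : ℝ) * x + (-4 : ℝ) := by
      have h := Kv2 (0 : ℤ) (x := (2 : ℝ) * x + ((-3 : ℝ)/8)) (by push_cast; linarith) (by push_cast; linarith)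
      push_cast at h; linarith
    have e3 : Gfun ((14 : ℝ) * x + (-4 : ℝ)) = (7 : ℝ) * x + ((-11 : ℝ)/8) := by
      have h := Gv3 (0 : ℤ) (x := (14 : ℝ) * x + (-4 : ℝ)) (by push_cast; linarith) (by push_cast; linarith)
      push_cast at h; linarith
    have e4 : Kfun x = (7 : ℝ) * x + ((-11 : ℝ)/8) := by
      have h := Kv2 (0 : ℤ) (x := x) (by push_cast; linarith) (by push_cast; linarith)
      push_cast at h; linarith
    rw [e1, e2, e3]; exact e4.symm
  rcases lt_or_ge x ((3 : ℝ)/8) with hc3 | hc3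
  · -- [5/14, 3/8)
    have e1 : Gfun x = (2 : ℝ) * x + ((-3 : ℝ)/8) := by
      have h := Gv2 (0 : ℤ) (x := x) (by push_cast; linarith) (by push_cast; linarith)
      push_cast at h; linarith
    have e2 : Kfun ((2 : ℝ) * x + ((-3 : ℝ)/8)) = (14 : ℝ) * x + (-4 : ℝ) := by
      have h := Kv2 (0 : ℤ) (x := (2 : ℝ) * x + ((-3 : ℝ)/8)) (by push_cast; linarith) (by push_cast; linarith)
      push_cast at h; linarith
    have e3 : Gfun ((14 : ℝ) * x + (-4 : ℝ)) = (7 : ℝ) * x + ((-11 : ℝ)/8) := by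
      have h := Gv1 (1 : ℤ) (x := (14 : ℝ) * x + (-4 : ℝ)) (by push_cast; linarith) (by push_cast; linarith)
      push_cast at h; linarith
    have e4 : Kfun x = (7 : ℝ) * x + ((-11 : ℝ)/8) := by
      have h := Kv2 (0 : ℤ) (x := x) (by push_cast; linarith) (by push_cast; linarith)
      push_cast at h; linarith
    rw [e1, e2, e3]; exact e4.symm
  rcases lt_or_ge x ((2 : ℝ)/3) with hc4 | hc4
  · -- [3/8, 2/3)
    have e1 : Gfun x = (2 : ℝ) * x + ((-3 : ℝ)/8) := by
      have h := Gv2 (0 : ℤ) (x := x) (by push_cast; linarith) (by push_cast; linarith)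
      push_cast at h; linarith
    have e2 : Kfun ((2 : ℝ) * x + ((-3 : ℝ)/8)) = ((2 : ℝ)/7) * x + ((8 : ℝ)/7) := by
      have h := Kv3 (0 : ℤ) (x := (2 : ℝ) * x + ((-3 : ℝ)/8)) (by push_cast; linarith) (by push_cast; linarith)
      push_cast at h; linarith
    have e3 : Gfun (((2 : ℝ)/7) * x + ((8 : ℝ)/7)) = ((1 : ℝ)/7) * x + ((67 : ℝ)/56) := by
      have h := Gv1 (1 : ℤ) (x := ((2 : ℝ)/7) * x + ((8 : ℝ)/7)) (by push_cast; linarith) (by push_cast; linarith)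
      push_cast at h; linarith
    have e4 : Kfun x = ((1 : ℝ)/7) * x + ((67 : ℝ)/56) := by
      have h := Kv3 (0 : ℤ) (x := x) (by push_cast; linarith) (by push_cast; linarith)
      push_cast at h; linarith
    rw [e1, e2, e3]; exact e4.symm
  rcases lt_or_ge x ((3 : ℝ)/4) with hc5 | hc5
  · -- [2/3, 3/4)
    have e1 : Gfun x = ((1 : ℝ)/2) * x + ((5 : ℝ)/8) := by
      have h := Gv3 (0 : ℤ) (x := x) (by push_cast; linarith) (by push_cast; linarith)
      push_cast at h; linarith
    have e2 : Kfun (((1 : ℝ)/2) * x + ((5 : ℝ)/8)) = ((1 : ℝ)/14) * x + ((9 : ℝ)/7) := by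
      have h := Kv3 (0 : ℤ) (x := ((1 : ℝ)/2) * x + ((5 : ℝ)/8)) (by push_cast; linarith) (by push_cast; linarith)
      push_cast at h; linarith
    have e3 : Gfun (((1 : ℝ)/14) * x + ((9 : ℝ)/7)) = ((1 : ℝ)/7) * x + ((67 : ℝ)/56) := by
      have h := Gv2 (1 : ℤ) (x := ((1 : ℝ)/14) * x + ((9 : ℝ)/7)) (by push_cast; linarith) (by push_cast; linarith)
      push_cast at h; linarith
    have e4 : Kfun x = ((1 : ℝ)/7) * x + ((67 : ℝ)/56) := by
      have h := Kv3 (0 : ℤ) (x := x) (by push_cast; linarith) (by push_cast; linarith)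
      push_cast at h; linarith
    rw [e1, e2, e3]; exact e4.symm
  -- [3/4, 1)
  have e1 : Gfun x = ((1 : ℝ)/2) * x + ((5 : ℝ)/8) := by
    have h := Gv3 (0 : ℤ) (x := x) (by push_cast; linarith) (by push_cast; linarith)
    push_cast at h; linarith
  have e2 : Kfun (((1 : ℝ)/2) * x + ((5 : ℝ)/8)) = ((1 : ℝ)/14) * x + ((9 : ℝ)/7) := by
    have h := Kv1 (1 : ℤ) (x := ((1 : ℝ)/2) * x + ((5 : ℝ)/8)) (by push_cast; linarith) (by push_cast; linarith)
    push_cast at h; linarith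
  have e3 : Gfun (((1 : ℝ)/14) * x + ((9 : ℝ)/7)) = ((1 : ℝ)/7) * x + ((67 : ℝ)/56) := by
    have h := Gv2 (1 : ℤ) (x := ((1 : ℝ)/14) * x + ((9 : ℝ)/7)) (by push_cast; linarith) (by push_cast; linarith)
    push_cast at h; linarith
  have e4 : Kfun x = ((1 : ℝ)/7) * x + ((67 : ℝ)/56) := by
    have h := Kv3 (0 : ℤ) (x := x) (by push_cast; linarith) (by push_cast; linarith)
    push_cast at h; linarith
  rw [e1, e2, e3]; exact e4.symm

lemma Ident1 (x : ℝ) : Gfun (Kfun (Gfun x)) = Kfun x := by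
  have hbase := Ident1_base (Int.fract_nonneg x) (Int.fract_lt_one x)
  have hx : Int.fract x + (⌊x⌋ : ℤ) = x := by
    push_cast; rw [Int.fract]; ring
  calc Gfun (Kfun (Gfun x)) = Gfun (Kfun (Gfun (Int.fract x + (⌊x⌋ : ℤ)))) := by rw [hx]
  _ = Gfun (Kfun (Gfun (Int.fract x)) + (⌊x⌋ : ℤ)) := by rw [Gfun_add_int, Kfun_add_int]
  _ = Gfun (Kfun (Gfun (Int.fract x))) + (⌊x⌋ : ℤ) := by rw [Gfun_add_int]
  _ = Kfun (Int.fract x) + (⌊x⌋ : ℤ) := by rw [hbase]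
  _ = Kfun (Int.fract x + (⌊x⌋ : ℤ)) := by rw [Kfun_add_int]
  _ = Kfun x := by rw [hx]

lemma Odd_base {x : ℝ} (hx0 : 0 ≤ x) (hx1 : x < 1) : Gfun (-x) = 1/4 - Gfun x := by
  rcases eq_or_lt_of_le hx0 with h0 | h0
  · rw [← h0]
    have h := Gv1 (0 : ℤ) (x := (0:ℝ)) (by norm_num) (by norm_num)
    rw [neg_zero, h]; norm_num
  rcases lt_or_ge x (1/3 : ℝ) with hc | hc
  · have e1 : Gfun x = x/2 + 1/8 := by
      have h := Gv1 (0 : ℤ) (x := x) (by push_cast; linarith) (by push_cast; linarith)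
      push_cast at h; linarith
    have e2 : Gfun (-x) = -x/2 + 1/8 := by
      have h := Gv3 (-1 : ℤ) (x := -x) (by push_cast; linarith) (by push_cast; linarith)
      push_cast at h; linarith
    rw [e1, e2]; ring
  rcases lt_or_ge x (2/3 : ℝ) with hc2 | hc2
  · have e1 : Gfun x = 2*x - 3/8 := by
      have h := Gv2 (0 : ℤ) (x := x) (by push_cast; linarith) (by push_cast; linarith)
      push_cast at h; linarith
    have e2 : Gfun (-x) = -2*x + 5/8 := by
      have h := Gv2 (-1 : ℤ) (x := -x) (by push_cast; linarith) (by push_cast; linarith)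
      push_cast at h; linarith
    rw [e1, e2]; ring
  · have e1 : Gfun x = x/2 + 5/8 := by
      have h := Gv3 (0 : ℤ) (x := x) (by push_cast; linarith) (by push_cast; linarith)
      push_cast at h; linarith
    have e2 : Gfun (-x) = -x/2 - 3/8 := by
      have h := Gv1 (-1 : ℤ) (x := -x) (by push_cast; linarith) (by push_cast; linarith)
      push_cast at h; linarith
    rw [e1, e2]; ring

lemma OddG (x : ℝ) : Gfun (-x) = 1/4 - Gfun x := by
  have hbase := Odd_base (Int.fract_nonneg x) (Int.fract_lt_one x)
  have hx : Int.fract x + (⌊x⌋ : ℤ) = x := by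
    push_cast; rw [Int.fract]; ring
  have h1 : Gfun (-x) = Gfun (-Int.fract x) - (⌊x⌋ : ℤ) := by
    have : -x = -Int.fract x + (-⌊x⌋ : ℤ) := by push_cast; rw [Int.fract]; ring
    rw [this, Gfun_add_int]; push_cast; ring
  have h2 : Gfun x = Gfun (Int.fract x) + (⌊x⌋ : ℤ) := by
    conv_lhs => rw [← hx]
    rw [Gfun_add_int]
  rw [h1, h2, hbase]; ring

lemma Gfun_locAffine {y : ℝ} (hy : Int.fract y ∉ ({0, 1/3, 2/3} : Set ℝ)) :
    IsLocallyAffineAt Gfun y := by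
  simp only [Set.mem_insert_iff, Set.mem_singleton_iff, not_or] at hy
  obtain ⟨h0, h13, h23⟩ := hy
  have hf0 : 0 ≤ Int.fract y := Int.fract_nonneg y
  have hf1 : Int.fract y < 1 := Int.fract_lt_one y
  have hfr : Int.fract y = y - ⌊y⌋ := rfl
  set n := ⌊y⌋ with hn
  rw [hfr] at h0 h13 h23 hf0 hf1
  rcases lt_trichotomy (y - (n:ℝ)) (1/3) with hA | hA | hA
  · refine ⟨1/2, 1/8 + n/2, ?_⟩
    have hmem : Set.Ioo ((n:ℝ)) ((n:ℝ) + 1/3) ∈ nhds y := by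
      apply Ioo_mem_nhds <;> [skip; linarith]
      rcases lt_or_eq_of_le hf0 with h | h
      · linarith
      · exact absurd h.symm h0
    filter_upwards [hmem] with z hz
    rw [Gv1 n hz.1.le (by linarith [hz.2])]
    ring
  · exact absurd hA h13
  · rcases lt_trichotomy (y - (n:ℝ)) (2/3) with hB | hB | hB
    · refine ⟨2, -3/8 - n, ?_⟩
      have hmem : Set.Ioo ((n:ℝ) + 1/3) ((n:ℝ) + 2/3) ∈ nhds y := by
        apply Ioo_mem_nhds <;> linarith
      filter_upwards [hmem] with z hz
      rw [Gv2 n hz.1.le hz.2.le]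
      ring
    · exact absurd hB h23
    · refine ⟨1/2, 5/8 + n/2, ?_⟩
      have hmem : Set.Ioo ((n:ℝ) + 2/3) ((n:ℝ) + 1) ∈ nhds y := by
        apply Ioo_mem_nhds <;> linarith
      filter_upwards [hmem] with z hz
      rw [Gv3 n hz.1.le hz.2]
      ring

lemma Kfun_locAffine {y : ℝ} (hy : Int.fract y ∉ ({0, 1/4, 3/8} : Set ℝ)) :
    IsLocallyAffineAt Kfun y := by
  simp only [Set.mem_insert_iff, Set.mem_singleton_iff, not_or] at hy
  obtain ⟨h0, h13, h23⟩ := hy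
  have hf0 : 0 ≤ Int.fract y := Int.fract_nonneg y
  have hf1 : Int.fract y < 1 := Int.fract_lt_one y
  have hfr : Int.fract y = y - ⌊y⌋ := rfl
  set n := ⌊y⌋ with hn
  rw [hfr] at h0 h13 h23 hf0 hf1
  rcases lt_trichotomy (y - (n:ℝ)) (1/4) with hA | hA | hA
  · refine ⟨1/7, 19/56 + 6*n/7, ?_⟩
    have hmem : Set.Ioo ((n:ℝ)) ((n:ℝ) + 1/4) ∈ nhds y := by
      apply Ioo_mem_nhds <;> [skip; linarith]
      rcases lt_or_eq_of_le hf0 with h | h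
      · linarith
      · exact absurd h.symm h0
    filter_upwards [hmem] with z hz
    rw [Kv1 n hz.1.le (by linarith [hz.2])]
    ring
  · exact absurd hA h13
  · rcases lt_trichotomy (y - (n:ℝ)) (3/8) with hB | hB | hB
    · refine ⟨7, -11/8 - 6*n, ?_⟩
      have hmem : Set.Ioo ((n:ℝ) + 1/4) ((n:ℝ) + 3/8) ∈ nhds y := by
        apply Ioo_mem_nhds <;> linarith
      filter_upwards [hmem] with z hz
      rw [Kv2 n hz.1.le hz.2.le]
      ring
    · exact absurd hB h23
    · refine ⟨1/7, 67/56 + 6*n/7, ?_⟩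
      have hmem : Set.Ioo ((n:ℝ) + 3/8) ((n:ℝ) + 1) ∈ nhds y := by
        apply Ioo_mem_nhds <;> linarith
      filter_upwards [hmem] with z hz
      rw [Kv3 n hz.1.le hz.2]
      ring

noncomputable def Gp : Equiv.Perm ℝ := mkPerm Gfun Gfun_strictMono Gfun_surjective
noncomputable def Kp : Equiv.Perm ℝ := mkPerm Kfun Kfun_strictMono Kfun_surjective

lemma Gp_coe : ⇑Gp = Gfun := rfl
lemma Kp_coe : ⇑Kp = Kfun := rfl

lemma Gp_inPL : InPL Gp := by
  refine ⟨mkPerm_isHomeo _ _ _, fun x h => ?_⟩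
  apply not_accPt_fract (F := ({0, 1/3, 2/3} : Set ℝ)) (by
    apply Set.Finite.insert; apply Set.Finite.insert; exact Set.finite_singleton _) x
  apply h.of_subset
  intro y hy
  by_contra hcon
  exact hy (Gfun_locAffine hcon)

lemma Kp_inPL : InPL Kp := by
  refine ⟨mkPerm_isHomeo _ _ _, fun x h => ?_⟩
  apply not_accPt_fract (F := ({0, 1/4, 3/8} : Set ℝ)) (by
    apply Set.Finite.insert; apply Set.Finite.insert; exact Set.finite_singleton _) x
  apply h.of_subset
  intro y hy
  by_contra hcon
  exact hy (Kfun_locAffine hcon)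

/-- translation by 1/4 -/
noncomputable def Tp : Equiv.Perm ℝ := Equiv.addRight (1/4 : ℝ)
/-- negation -/
noncomputable def Np : Equiv.Perm ℝ := Equiv.neg ℝ

lemma Tp_coe (x : ℝ) : Tp x = x + 1/4 := rfl
lemma Np_coe (x : ℝ) : Np x = -x := rfl

lemma Tp_inPL : InPL Tp := by
  constructor
  · exact ⟨continuous_add_right _, continuous_add_right _⟩
  · intro x h
    have he : {y : ℝ | ¬ IsLocallyAffineAt (⇑Tp) y} = ∅ := by
      apply Set.eq_empty_iff_forall_notMem.2
      intro y hy
      refine hy ⟨1, 1/4, ?_⟩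
      filter_upwards with z
      rw [Tp_coe]; ring
    rw [he] at h
    exact not_accPt_of_finite Set.finite_empty h

lemma Np_inPL : InPL Np := by
  constructor
  · exact ⟨continuous_neg, continuous_neg⟩
  · intro x h
    have he : {y : ℝ | ¬ IsLocallyAffineAt (⇑Np) y} = ∅ := by
      apply Set.eq_empty_iff_forall_notMem.2
      intro y hy
      refine hy ⟨-1, 0, ?_⟩
      filter_upwards with z
      rw [Np_coe]; ring
    rw [he] at h
    exact not_accPt_of_finite Set.finite_empty h

lemma Tp_strictMono : StrictMono ⇑Tp := fun a b h => by
  simp only [Tp_coe]; linarith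

/-! ### Perm-level identities for the model -/

lemma KGK_eq : Kp * Gp * Kp⁻¹ = Gp⁻¹ := by
  have h1 : Gp * (Kp * Gp) = Kp := by
    ext x
    simp only [Equiv.Perm.coe_mul, Function.comp_apply]
    exact Ident1 x
  have h2 : Kp * Gp = Gp⁻¹ * Kp := by
    calc Kp * Gp = Gp⁻¹ * (Gp * (Kp * Gp)) := by group
    _ = Gp⁻¹ * Kp := by rw [h1]
  calc Kp * Gp * Kp⁻¹ = Gp⁻¹ * Kp * Kp⁻¹ := by rw [h2]
  _ = Gp⁻¹ := by group

noncomputable def Hp : Equiv.Perm ℝ := Gp⁻¹ * Tp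

lemma NGN_eq : Np * Gp⁻¹ * Np = Hp := by
  ext x
  simp only [Hp, Equiv.Perm.coe_mul, Function.comp_apply]
  apply Gp.injective
  rw [Equiv.Perm.coe_inv, Equiv.apply_symm_apply]
  have hval : Gfun (⇑Gp⁻¹ (Np x)) = Np x := Equiv.apply_symm_apply Gp (Np x)
  show Gfun (-(⇑Gp⁻¹ (Np x))) = Tp x
  rw [OddG, hval, Np_coe, Tp_coe]
  ring

lemma Np_mul_Np : Np * Np = 1 := by
  ext x
  simp only [Equiv.Perm.coe_mul, Function.comp_apply, Np_coe, neg_neg]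
  rfl

lemma Np_inv : Np⁻¹ = Np := inv_eq_of_mul_eq_one_right Np_mul_Np

/-- reverser for `Hp` -/
lemma NKN_rev : (Np * Kp * Np) * Hp * (Np * Kp * Np)⁻¹ = Hp⁻¹ := by
  have h1 : Hp = Np * Gp⁻¹ * Np := NGN_eq.symm
  have h2 : Kp * Gp⁻¹ * Kp⁻¹ = Gp := by
    have h := congrArg Inv.inv KGK_eq
    simp only [mul_inv_rev, inv_inv] at h
    rw [← mul_assoc] at h
    exact h
  rw [h1]
  simp only [mul_inv_rev, Np_inv]
  calc Np * Kp * Np * (Np * Gp⁻¹ * Np) * (Np * Kp⁻¹ * Np)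
      = Np * Kp * (Np * Np) * Gp⁻¹ * (Np * Np) * Kp⁻¹ * Np := by group
  _ = Np * (Kp * Gp⁻¹ * Kp⁻¹) * Np := by rw [Np_mul_Np]; group
  _ = Np * Gp * Np := by rw [h2]
  _ = (Np * Gp⁻¹ * Np)⁻¹ := by simp only [mul_inv_rev, Np_inv, inv_inv]; group

open Filter Set Topology


/-- the conjugacy onto the model translation -/
lemma exists_conj (f : Equiv.Perm ℝ) (hf : InPL f) (hfm : StrictMono ⇑f)
    (hfp : ∀ x : ℝ, x < f x) :
    ∃ u : Equiv.Perm ℝ, InPL u ∧ StrictMono ⇑u ∧ ∀ x, u (f x) = u x + 1/4 := by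
  classical
  set e : ℤ → ℝ := fun n => (f ^ n) 0 with he
  have hpow_succ : ∀ n : ℤ, f ^ (n + 1) = f * f ^ n := by
    intro n; rw [add_comm, zpow_one_add]
  have he_succ : ∀ n : ℤ, e (n + 1) = f (e n) := by
    intro n
    show (f ^ (n+1)) 0 = f ((f ^ n) 0)
    rw [hpow_succ n, Equiv.Perm.mul_apply]
  have hemono : StrictMono e := strictMono_int_of_lt_succ (fun n => by
    rw [he_succ]; exact hfp (e n))
  have hcont : Continuous ⇑f := hf.1.1
  have htop : ∀ M : ℝ, ∃ n : ℤ, M < e n := by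
    by_contra hcon
    push_neg at hcon
    obtain ⟨M, hM⟩ := hcon
    have hbdd : BddAbove (Set.range e) := ⟨M, by rintro _ ⟨n, rfl⟩; exact hM n⟩
    have hlim : Tendsto e atTop (𝓝 (⨆ n, e n)) := tendsto_atTop_ciSup hemono.monotone hbdd
    have hsh : Tendsto (fun n : ℤ => n + 1) atTop atTop :=
      tendsto_atTop_add_const_right atTop (1 : ℤ) tendsto_id
    have hlim2 : Tendsto (fun n : ℤ => e (n + 1)) atTop (𝓝 (⨆ n, e n)) := hlim.comp hsh
    have hlim3 : Tendsto (fun n : ℤ => f (e n)) atTop (𝓝 (f (⨆ n, e n))) :=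
      (hcont.tendsto _).comp hlim
    have heq : (fun n : ℤ => e (n + 1)) = fun n : ℤ => f (e n) := funext he_succ
    rw [heq] at hlim2
    have := tendsto_nhds_unique hlim2 hlim3
    exact absurd this.symm (ne_of_gt (hfp _))
  have hbot : ∀ M : ℝ, ∃ n : ℤ, e n < M := by
    by_contra hcon
    push_neg at hcon
    obtain ⟨M, hM⟩ := hcon
    have hbdd : BddBelow (Set.range e) := ⟨M, by rintro _ ⟨n, rfl⟩; exact hM n⟩
    have hlim : Tendsto e atBot (𝓝 (⨅ n, e n)) := tendsto_atBot_ciInf hemono.monotone hbdd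
    have hsh : Tendsto (fun n : ℤ => n + 1) atBot atBot :=
      tendsto_atBot_add_const_right atBot (1 : ℤ) tendsto_id
    have hlim2 : Tendsto (fun n : ℤ => e (n + 1)) atBot (𝓝 (⨅ n, e n)) := hlim.comp hsh
    have hlim3 : Tendsto (fun n : ℤ => f (e n)) atBot (𝓝 (f (⨅ n, e n))) :=
      (hcont.tendsto _).comp hlim
    have heq : (fun n : ℤ => e (n + 1)) = fun n : ℤ => f (e n) := funext he_succ
    rw [heq] at hlim2
    have := tendsto_nhds_unique hlim2 hlim3
    exact absurd this.symm (ne_of_gt (hfp _))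
  have hNex : ∀ x : ℝ, ∃ n : ℤ, e n ≤ x ∧ x < e (n + 1) := by
    intro x
    obtain ⟨m, hm⟩ := htop x
    obtain ⟨l, hl⟩ := hbot x
    have hbdd : ∃ b : ℤ, ∀ z : ℤ, (fun n => e n ≤ x) z → z ≤ b := by
      refine ⟨m, fun z hz => ?_⟩
      by_contra hc
      push_neg at hc
      have := hemono.monotone (le_of_lt hc)
      linarith
    obtain ⟨lub, hlub1, hlub2⟩ := Int.exists_greatest_of_bdd hbdd ⟨l, hl.le⟩
    refine ⟨lub, hlub1, ?_⟩
    by_contra hc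
    push_neg at hc
    have := hlub2 (lub + 1) hc
    omega
  have hNuniq : ∀ (x : ℝ) (n m : ℤ), e n ≤ x → x < e (n + 1) → e m ≤ x → x < e (m + 1) →
      n = m := by
    intro x n m h1 h2 h3 h4
    by_contra hc
    rcases lt_or_gt_of_ne hc with h | h
    · have : e (n + 1) ≤ e m := hemono.monotone (by omega)
      linarith
    · have : e (m + 1) ≤ e n := hemono.monotone (by omega)
      linarith
  set N : ℝ → ℤ := fun x => Classical.choose (hNex x) with hN
  have hN1 : ∀ x, e (N x) ≤ x := fun x => (Classical.choose_spec (hNex x)).1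
  have hN2 : ∀ x, x < e (N x + 1) := fun x => (Classical.choose_spec (hNex x)).2
  have hNc : ∀ (x : ℝ) (n : ℤ), e n ≤ x → x < e (n + 1) → N x = n := by
    intro x n h1 h2
    exact hNuniq x (N x) n (hN1 x) (hN2 x) h1 h2
  have hc1 : (0:ℝ) < f 0 := hfp 0
  have hcan : ∀ (n : ℤ) (t : ℝ), (f ^ (-n)) ((f ^ n) t) = t := by
    intro n t
    rw [← Equiv.Perm.mul_apply, ← zpow_add]
    simp
  have hval_lo : ∀ x : ℝ, 0 ≤ (f ^ (-(N x))) x := by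
    intro x
    have h1 := (strictMono_zpow hfm (-(N x))).monotone (hN1 x)
    have h2 : (f ^ (-(N x))) (e (N x)) = 0 := hcan (N x) 0
    linarith
  have hval_hi : ∀ x : ℝ, (f ^ (-(N x))) x < f 0 := by
    intro x
    have h1 := strictMono_zpow hfm (-(N x)) (hN2 x)
    have h2 : (f ^ (-(N x))) (e (N x + 1)) = f 0 := by
      show (f ^ (-(N x))) ((f ^ (N x + 1)) 0) = f 0
      rw [← Equiv.Perm.mul_apply, ← zpow_add]
      have hexp : -(N x) + (N x + 1) = 1 := by ring
      rw [hexp, zpow_one]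
    linarith
  set u0 : ℝ → ℝ := fun x => (N x : ℝ)/4 + ((f ^ (-(N x))) x) / (4 * f 0) with hu0
  have hufx : ∀ x, u0 (f x) = u0 x + 1/4 := by
    intro x
    have hNfx : N (f x) = N x + 1 := by
      apply hNc
      · rw [he_succ]
        exact hfm.monotone (hN1 x)
      · rw [he_succ]
        exact hfm (hN2 x)
    have hvv : (f ^ (-(N x + 1))) (f x) = (f ^ (-(N x))) x := by
      have h5 : f ^ (-(N x + 1)) * f ^ (1:ℤ) = f ^ (-(N x)) := by
        rw [← zpow_add]
        congr 1
        ring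
      calc (f ^ (-(N x + 1))) (f x) = (f ^ (-(N x + 1))) ((f ^ (1:ℤ)) x) := by rw [zpow_one]
      _ = (f ^ (-(N x + 1)) * f ^ (1:ℤ)) x := (Equiv.Perm.mul_apply _ _ _).symm
      _ = (f ^ (-(N x))) x := by rw [h5]
    show (N (f x) : ℝ)/4 + ((f ^ (-(N (f x)))) (f x)) / (4 * f 0) = u0 x + 1/4
    rw [hNfx, hvv]
    push_cast
    unfold u0
    ring
  have humono : StrictMono u0 := by
    intro x y hxy
    have hNle : N x ≤ N y := by
      by_contra hcon
      push_neg at hcon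
      have h1 : e (N x) ≤ x := hN1 x
      have h2 : y < e (N y + 1) := hN2 y
      have h3 : e (N y + 1) ≤ e (N x) := hemono.monotone (by omega)
      linarith
    rcases eq_or_lt_of_le hNle with heq | hlt
    · have h1 := strictMono_zpow hfm (-(N x)) hxy
      have h4f : (0:ℝ) < 4 * f 0 := by linarith
      have h2 : ((f ^ (-(N x))) x) / (4 * f 0) < ((f ^ (-(N x))) y) / (4 * f 0) := by gcongr
      show (N x : ℝ)/4 + ((f ^ (-(N x))) x) / (4 * f 0) <
        (N y : ℝ)/4 + ((f ^ (-(N y))) y) / (4 * f 0)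
      rw [← heq]
      linarith
    · have h1 : ((f ^ (-(N x))) x) / (4 * f 0) < 1/4 := by
        rw [div_lt_iff₀ (by linarith)]
        have := hval_hi x
        linarith
      have h2 : 0 ≤ ((f ^ (-(N y))) y) / (4 * f 0) := by
        apply div_nonneg (hval_lo y) (by linarith)
      have h3 : (N x : ℝ) + 1 ≤ (N y : ℝ) := by exact_mod_cast hlt
      show (N x : ℝ)/4 + ((f ^ (-(N x))) x) / (4 * f 0) <
        (N y : ℝ)/4 + ((f ^ (-(N y))) y) / (4 * f 0)
      linarith
  have husurj : Function.Surjective u0 := by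
    intro y
    set n : ℤ := ⌊4 * y⌋ with hn
    set t : ℝ := 4 * y - n with ht
    have ht0 : 0 ≤ t := by
      have := Int.floor_le (4 * y); rw [ht]; linarith
    have ht1 : t < 1 := by
      have := Int.lt_floor_add_one (4 * y); rw [ht]; push_cast; linarith
    set x : ℝ := (f ^ n) (t * f 0) with hx
    have hx1 : e n ≤ x := by
      apply (strictMono_zpow hfm n).monotone
      positivity
    have hx2 : x < e (n + 1) := by
      have h1 : t * f 0 < f 0 := by
        calc t * f 0 < 1 * f 0 := by apply mul_lt_mul_of_pos_right ht1 hc1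
        _ = f 0 := one_mul _
      have h2 : e (n+1) = (f ^ n) (f 0) := by
        show (f ^ (n+1)) 0 = (f ^ n) (f 0)
        rw [zpow_add_one, Equiv.Perm.mul_apply]
      rw [h2]
      exact strictMono_zpow hfm n h1
    have hNx : N x = n := hNc x n hx1 hx2
    refine ⟨x, ?_⟩
    show (N x : ℝ)/4 + ((f ^ (-(N x))) x) / (4 * f 0) = y
    rw [hNx, hcan n (t * f 0)]
    rw [ht]
    push_cast
    field_simp
    ring
  refine ⟨mkPerm u0 humono husurj, ⟨mkPerm_isHomeo _ _ _, ?_⟩, by rw [mkPerm_coe]; exact humono,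
    fun x => hufx x⟩
  -- InPL bad set part
  intro x hacc
  rw [mkPerm_coe] at hacc
  set n := N x with hnx
  have hU : Set.Ioo (e (n - 1)) (e (n + 1)) ∈ nhds x := by
    apply Ioo_mem_nhds
    · calc e (n - 1) < e n := hemono (by omega)
      _ ≤ x := hN1 x
    · exact hN2 x
  have haff : ∀ (m : ℤ) (y : ℝ), e m < y → y < e (m + 1) →
      IsLocallyAffineAt (⇑(f ^ (-m))) y → IsLocallyAffineAt u0 y := by
    intro m y hy1 hy2 hla
    obtain ⟨a, b, hab⟩ := hla
    refine ⟨a / (4 * f 0), (m : ℝ)/4 + b / (4 * f 0), ?_⟩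
    have hmem : Set.Ioo (e m) (e (m + 1)) ∈ nhds y := Ioo_mem_nhds hy1 hy2
    filter_upwards [hmem, hab] with z hz1 hz2
    have hNz : N z = m := hNc z m hz1.1.le hz1.2
    show (N z : ℝ)/4 + ((f ^ (-(N z))) z) / (4 * f 0) = a / (4 * f 0) * z + ((m : ℝ)/4 + b / (4 * f 0))
    rw [hNz, hz2]
    ring
  have hsub : {y : ℝ | ¬ IsLocallyAffineAt u0 y} ∩ Set.Ioo (e (n - 1)) (e (n + 1)) ⊆
      ({y : ℝ | ¬ IsLocallyAffineAt (⇑(f ^ (-(n-1)))) y} ∪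
       {y : ℝ | ¬ IsLocallyAffineAt (⇑(f ^ (-n))) y}) ∪ {e n} := by
    rintro y ⟨hy1, hy2, hy3⟩
    by_contra hcon
    simp only [Set.mem_union, Set.mem_setOf_eq, Set.mem_singleton_iff, not_or, not_not] at hcon
    obtain ⟨⟨hA, hB⟩, hC⟩ := hcon
    rcases lt_trichotomy y (e n) with h | h | h
    · have hrw : n - 1 + 1 = n := by omega
      exact hy1 (haff (n-1) y hy2 (by rw [hrw]; exact h) hA)
    · exact hC h
    · exact hy1 (haff n y h hy3 hB)
  have h2 := (accPt_inter hU hacc).of_subset hsub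
  rcases accPt_union h2 with h3 | h3
  · rcases accPt_union h3 with h4 | h4
    · exact (hf.zpow (-(n-1))).2 x h4
    · exact (hf.zpow (-n)).2 x h4
  · exact not_accPt_of_finite (Set.finite_singleton _) h3

lemma NKN_strictMono : StrictMono ⇑(Np * Kp * Np) := by
  intro a b hab
  simp only [Equiv.Perm.coe_mul, Function.comp_apply, Np_coe, Kp_coe]
  have := Kfun_strictMono (neg_lt_neg hab)
  linarith

lemma NKN_inPL : InPL (Np * Kp * Np) := (Np_inPL.mul Kp_inPL).mul Np_inPL

lemma main_pos (f : Equiv.Perm ℝ) (hf : InPL f) (hfm : StrictMono (⇑f))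
    (hfp : ∀ x : ℝ, x < f x) :
    ∃ g h : Equiv.Perm ℝ, InPL g ∧ StrictMono (⇑g) ∧ InPL h ∧ StrictMono (⇑h) ∧
      (∃ k : Equiv.Perm ℝ, InPL k ∧ StrictMono (⇑k) ∧ k * g * k⁻¹ = g⁻¹) ∧
      (∃ k : Equiv.Perm ℝ, InPL k ∧ StrictMono (⇑k) ∧ k * h * k⁻¹ = h⁻¹) ∧
      f = g * h := by
  obtain ⟨u, hu, hum, huf⟩ := exists_conj f hf hfm hfp
  have huinv : StrictMono ⇑u⁻¹ := strictMono_perm_inv hum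
  have hGm : StrictMono ⇑Gp := Gfun_strictMono
  have hKm : StrictMono ⇑Kp := Kfun_strictMono
  have hfT : f = u⁻¹ * Tp * u := by
    have huT : u * f = Tp * u := by
      ext x
      simp only [Equiv.Perm.coe_mul, Function.comp_apply]
      rw [huf x]
      rfl
    calc f = u⁻¹ * (u * f) := by group
    _ = u⁻¹ * (Tp * u) := by rw [huT]
    _ = u⁻¹ * Tp * u := by group
  refine ⟨u⁻¹ * Gp * u, u⁻¹ * Hp * u,
    (hu.inv.mul Gp_inPL).mul hu, ?_,
    (hu.inv.mul ((Gp_inPL.inv).mul Tp_inPL)).mul hu, ?_,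
    ⟨u⁻¹ * Kp * u, (hu.inv.mul Kp_inPL).mul hu, ?_, ?_⟩,
    ⟨u⁻¹ * (Np * Kp * Np) * u, (hu.inv.mul NKN_inPL).mul hu, ?_, ?_⟩, ?_⟩
  · simp only [Equiv.Perm.coe_mul]
    exact (huinv.comp hGm).comp hum
  · show StrictMono ⇑(u⁻¹ * (Gp⁻¹ * Tp) * u)
    simp only [Equiv.Perm.coe_mul]
    exact ((huinv.comp ((strictMono_perm_inv hGm).comp Tp_strictMono))).comp hum
  · simp only [Equiv.Perm.coe_mul]
    exact (huinv.comp hKm).comp hum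
  · have h1 : (u⁻¹ * Kp * u) * (u⁻¹ * Gp * u) * (u⁻¹ * Kp * u)⁻¹
        = u⁻¹ * (Kp * Gp * Kp⁻¹) * u := by group
    rw [h1, KGK_eq]
    group
  · simp only [Equiv.Perm.coe_mul]
    exact (huinv.comp NKN_strictMono).comp hum
  · have h1 : (u⁻¹ * (Np * Kp * Np) * u) * (u⁻¹ * Hp * u) * (u⁻¹ * (Np * Kp * Np) * u)⁻¹
        = u⁻¹ * ((Np * Kp * Np) * Hp * (Np * Kp * Np)⁻¹) * u := by group
    rw [h1, NKN_rev]
    group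
  · have h1 : (u⁻¹ * Gp * u) * (u⁻¹ * Hp * u) = u⁻¹ * (Gp * Hp) * u := by group
    have h2 : Gp * Hp = Tp := by rw [Hp]; group
    rw [h1, h2, ← hfT]

theorem stmt_16' (f : Equiv.Perm ℝ) (hf : InPL f) (hfm : StrictMono (⇑f))
    (hfp : ∀ x : ℝ, f x ≠ x) :
    ∃ g h : Equiv.Perm ℝ, InPL g ∧ StrictMono (⇑g) ∧ InPL h ∧ StrictMono (⇑h) ∧
      (∃ k : Equiv.Perm ℝ, InPL k ∧ StrictMono (⇑k) ∧ k * g * k⁻¹ = g⁻¹) ∧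
      (∃ k : Equiv.Perm ℝ, InPL k ∧ StrictMono (⇑k) ∧ k * h * k⁻¹ = h⁻¹) ∧
      f = g * h := by
  have hdi : (∀ x : ℝ, x < f x) ∨ (∀ x : ℝ, f x < x) := by
    by_contra hcon
    push_neg at hcon
    obtain ⟨⟨a, ha⟩, ⟨b, hb⟩⟩ := hcon
    have hc : Continuous fun x : ℝ => f x - x := (hf.1.1).sub continuous_id
    have h0 : (0:ℝ) ∈ Set.uIcc (f a - a) (f b - b) := by
      rw [Set.mem_uIcc]
      have ha' : f a - a < 0 := by
        rcases lt_or_eq_of_le ha with h | h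
        · linarith
        · exact absurd h (hfp a)
      have hb' : 0 < f b - b := by
        rcases lt_or_eq_of_le hb with h | h
        · linarith
        · exact absurd h.symm (hfp b)
      left
      exact ⟨by linarith, by linarith⟩
    obtain ⟨c, _, hc0⟩ := intermediate_value_uIcc hc.continuousOn h0
    simp only at hc0
    exact hfp c (by linarith)
  rcases hdi with hpos | hneg
  · exact main_pos f hf hfm hpos
  · have hinvpos : ∀ x : ℝ, x < f⁻¹ x := by
      intro x
      have h1 := hneg (f⁻¹ x)
      rwa [Equiv.Perm.coe_inv, Equiv.apply_symm_apply] at h1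
    obtain ⟨g, h, hg, hgm, hh, hhm, ⟨k1, hk1, hk1m, hk1e⟩, ⟨k2, hk2, hk2m, hk2e⟩, hfe⟩ :=
      main_pos f⁻¹ hf.inv (strictMono_perm_inv hfm) hinvpos
    refine ⟨h⁻¹, g⁻¹, hh.inv, strictMono_perm_inv hhm, hg.inv, strictMono_perm_inv hgm,
      ⟨k2, hk2, hk2m, ?_⟩, ⟨k1, hk1, hk1m, ?_⟩, ?_⟩
    · have e2 : k2 * h⁻¹ * k2⁻¹ = (k2 * h * k2⁻¹)⁻¹ := by group
      rw [e2, hk2e, inv_inv]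
    · have e2 : k1 * g⁻¹ * k1⁻¹ = (k1 * g * k1⁻¹)⁻¹ := by group
      rw [e2, hk1e, inv_inv]
    · have := congrArg Inv.inv hfe
      rw [inv_inv, mul_inv_rev] at this
      exact this

/-- Every fixed point free element of PL⁺(ℝ) is a composite of two elements of PL⁺(ℝ),
each reversible in PL⁺(ℝ). -/
theorem stmt_16 (f : Equiv.Perm ℝ) (hf : InPL f) (hfm : StrictMono (⇑f))
    (hfp : ∀ x : ℝ, f x ≠ x) :
    ∃ g h : Equiv.Perm ℝ, InPL g ∧ StrictMono (⇑g) ∧ InPL h ∧ StrictMono (⇑h) ∧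
      (∃ k : Equiv.Perm ℝ, InPL k ∧ StrictMono (⇑k) ∧ k * g * k⁻¹ = g⁻¹) ∧
      (∃ k : Equiv.Perm ℝ, InPL k ∧ StrictMono (⇑k) ∧ k * h * k⁻¹ = h⁻¹) ∧
      f = g * h := by
  exact stmt_16' f hf hfm hfp
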